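/- Let x, y be points of the upper half-space ℍⁿ with x′ ≠ y′ and |x−y| > √((xₙ−yₙ)² + |xₙ²−yₙ²|), where x′, y′ are the orthogonal projections of x, y to ∂ℍⁿ. Then there is a unique k ∈ (0,1) such that the point z = x′ + k(y′−x′) satisfies |x−z| = |y−z|, namely k = (|x′−y′|² − xₙ² + yₙ²)/(2|x′−y′|²), and for this z one has |x−z| = (|x−y|/2)·√((|x−y|² + 4·xₙ·yₙ)/(|x−y|² − (xₙ−yₙ)²)) and inf_{w∈∂ℍⁿ} max{|x−w|, |y−w|} = |x−z|. -/

import Mathlib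

open Metric Set

/-- The upper half-space `ℍⁿ = {x ∈ ℝⁿ : xₙ > 0}` (dimension `n + 1 ≥ 1`). -/
def upperHalfSpace (n : ℕ) : Set (EuclideanSpace ℝ (Fin (n + 1))) :=
  {x | 0 < x (Fin.last n)}

/-- Its boundary `∂ℍⁿ = {x ∈ ℝⁿ : xₙ = 0}`. -/
def upperHalfSpaceBdry (n : ℕ) : Set (EuclideanSpace ℝ (Fin (n + 1))) :=
  {x | x (Fin.last n) = 0}

lemma sq_dist_eq' {n : ℕ} (x w : EuclideanSpace ℝ (Fin n)) :
    dist x w ^ 2 = ∑ i, (x i - w i) ^ 2 := by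
  rw [EuclideanSpace.dist_eq, Real.sq_sqrt (by positivity)]
  simp [Real.dist_eq, sq_abs]

lemma pyth2' {n : ℕ} (x y x' y' : EuclideanSpace ℝ (Fin (n + 1)))
    (hx' : x' = Function.update x (Fin.last n) 0)
    (hy' : y' = Function.update y (Fin.last n) 0) :
    dist x y ^ 2 = dist x' y' ^ 2 + (x (Fin.last n) - y (Fin.last n)) ^ 2 := by
  rw [sq_dist_eq', sq_dist_eq', Fin.sum_univ_castSucc, Fin.sum_univ_castSucc]
  have hc : ∀ j : Fin n, (Fin.castSucc j : Fin (n+1)) ≠ Fin.last n :=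
    fun j => (Fin.castSucc_lt_last j).ne
  have h1 : ∀ j : Fin n, x' (Fin.castSucc j) = x (Fin.castSucc j) := by
    intro j; rw [hx']; exact Function.update_of_ne (hc j) _ _
  have h2 : ∀ j : Fin n, y' (Fin.castSucc j) = y (Fin.castSucc j) := by
    intro j; rw [hy']; exact Function.update_of_ne (hc j) _ _
  have h3 : x' (Fin.last n) = 0 := by rw [hx']; exact Function.update_self _ _ _
  have h4 : y' (Fin.last n) = 0 := by rw [hy']; exact Function.update_self _ _ _
  simp only [h1, h2, h3, h4]
  ring

lemma le_of_sq_le' {A B : ℝ} (hA : 0 ≤ A) (hB : 0 ≤ B) (h : A ^ 2 ≤ B ^ 2) : A ≤ B := by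
  nlinarith

set_option maxHeartbeats 800000

/-- For `x, y ∈ ℍⁿ` with `x′ ≠ y′` and `|x−y| > √((xₙ−yₙ)² + |xₙ²−yₙ²|)`, there is a
unique `k ∈ (0,1)` such that `z = x′ + k(y′−x′)` satisfies `|x−z| = |y−z|`, namely
`k = (|x′−y′|² − xₙ² + yₙ²)/(2|x′−y′|²)`; for this `z`,
`|x−z| = (|x−y|/2)·√((|x−y|² + 4 xₙ yₙ)/(|x−y|² − (xₙ−yₙ)²))` and
`inf_{w∈∂ℍⁿ} max{|x−w|, |y−w|} = |x−z|`. -/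
theorem stmt_18 {n : ℕ} (x y : EuclideanSpace ℝ (Fin (n + 1)))
    (hx : x ∈ upperHalfSpace n) (hy : y ∈ upperHalfSpace n)
    (x' y' : EuclideanSpace ℝ (Fin (n + 1)))
    (hx' : x' = Function.update x (Fin.last n) 0)
    (hy' : y' = Function.update y (Fin.last n) 0)
    (hne : x' ≠ y')
    (h : Real.sqrt ((x (Fin.last n) - y (Fin.last n)) ^ 2 +
        |x (Fin.last n) ^ 2 - y (Fin.last n) ^ 2|) < dist x y)
    (k : ℝ) (hk : k = (dist x' y' ^ 2 - x (Fin.last n) ^ 2 + y (Fin.last n) ^ 2) /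
      (2 * dist x' y' ^ 2))
    (z : EuclideanSpace ℝ (Fin (n + 1))) (hz : z = x' + k • (y' - x')) :
    k ∈ Ioo (0 : ℝ) 1 ∧
    dist x z = dist y z ∧
    (∀ k' ∈ Ioo (0 : ℝ) 1,
      dist x (x' + k' • (y' - x')) = dist y (x' + k' • (y' - x')) → k' = k) ∧
    dist x z = (dist x y / 2) *
      Real.sqrt ((dist x y ^ 2 + 4 * x (Fin.last n) * y (Fin.last n)) /
        (dist x y ^ 2 - (x (Fin.last n) - y (Fin.last n)) ^ 2)) ∧
    sInf ((fun w => max (dist x w) (dist y w)) '' upperHalfSpaceBdry n) = dist x z := by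
  have ha : 0 < x (Fin.last n) := hx
  have hb : 0 < y (Fin.last n) := hy
  have hd : 0 < dist x' y' := dist_pos.mpr hne
  have hD2 : dist x y ^ 2 = dist x' y' ^ 2 +
      (x (Fin.last n) - y (Fin.last n)) ^ 2 := pyth2' x y x' y' hx' hy'
  have hD0 : 0 < dist x y := lt_of_le_of_lt (Real.sqrt_nonneg _) h
  have habs : |x (Fin.last n) ^ 2 - y (Fin.last n) ^ 2| < dist x' y' ^ 2 := by
    have h2 := (Real.sqrt_lt' hD0).mp h
    linarith [hD2]
  obtain ⟨hab1, hab2⟩ := abs_lt.mp habs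
  have hk0 : 0 < k := by
    rw [hk]; exact div_pos (by nlinarith) (by positivity)
  have hk1 : k < 1 := by
    rw [hk, div_lt_one (by positivity)]; nlinarith
  have hx'l : x' (Fin.last n) = 0 := by rw [hx']; exact Function.update_self _ _ _
  have hy'l : y' (Fin.last n) = 0 := by rw [hy']; exact Function.update_self _ _ _
  have hbdry : ∀ t : ℝ, (x' + t • (y' - x')) (Fin.last n) = 0 := by
    intro t
    simp [PiLp.add_apply, PiLp.smul_apply, PiLp.sub_apply, hx'l, hy'l]
  have pythx : ∀ w : EuclideanSpace ℝ (Fin (n + 1)), w (Fin.last n) = 0 →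
      dist x w ^ 2 = dist x' w ^ 2 + x (Fin.last n) ^ 2 := by
    intro w hw
    have hupd : Function.update w (Fin.last n) 0 = w := by
      conv_lhs => rw [← hw]
      exact Function.update_eq_self _ _
    have := pyth2' x w x' (WithLp.toLp 2 (Function.update w (Fin.last n) 0)) hx' rfl
    rwa [hupd, WithLp.toLp_ofLp, hw, sub_zero] at this
  have pythy : ∀ w : EuclideanSpace ℝ (Fin (n + 1)), w (Fin.last n) = 0 →
      dist y w ^ 2 = dist y' w ^ 2 + y (Fin.last n) ^ 2 := by
    intro w hw
    have hupd : Function.update w (Fin.last n) 0 = w := by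
      conv_lhs => rw [← hw]
      exact Function.update_eq_self _ _
    have := pyth2' y w y' (WithLp.toLp 2 (Function.update w (Fin.last n) 0)) hy' rfl
    rwa [hupd, WithLp.toLp_ofLp, hw, sub_zero] at this
  have segx : ∀ t : ℝ, 0 ≤ t →
      dist x' (x' + t • (y' - x')) = t * dist x' y' := by
    intro t ht
    rw [dist_self_add_right, norm_smul, ← dist_eq_norm, Real.norm_eq_abs,
      abs_of_nonneg ht, dist_comm y' x']
  have segy : ∀ t : ℝ, t ≤ 1 →
      dist y' (x' + t • (y' - x')) = (1 - t) * dist x' y' := by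
    intro t ht
    have hvec : y' - (x' + t • (y' - x')) = (1 - t) • (y' - x') := by module
    rw [dist_eq_norm, hvec, norm_smul, Real.norm_eq_abs,
      abs_of_nonneg (by linarith : (0:ℝ) ≤ 1 - t), ← dist_eq_norm, dist_comm y' x']
  have distx : ∀ t : ℝ, 0 ≤ t →
      dist x (x' + t • (y' - x')) ^ 2 = (t * dist x' y') ^ 2 + x (Fin.last n) ^ 2 := by
    intro t ht
    rw [pythx _ (hbdry t), segx t ht]
  have disty : ∀ t : ℝ, t ≤ 1 →
      dist y (x' + t • (y' - x')) ^ 2 = ((1 - t) * dist x' y') ^ 2 + y (Fin.last n) ^ 2 := by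
    intro t ht
    rw [pythy _ (hbdry t), segy t ht]
  have hxz2 : dist x z ^ 2 = (k * dist x' y') ^ 2 + x (Fin.last n) ^ 2 := by
    rw [hz]; exact distx k hk0.le
  have hyz2 : dist y z ^ 2 = ((1 - k) * dist x' y') ^ 2 + y (Fin.last n) ^ 2 := by
    rw [hz]; exact disty k hk1.le
  have hd' : dist x' y' ≠ 0 := ne_of_gt hd
  have hkd : 2 * k * dist x' y' ^ 2 =
      dist x' y' ^ 2 - x (Fin.last n) ^ 2 + y (Fin.last n) ^ 2 := by
    rw [hk]; field_simp
  have hsq : dist x z ^ 2 = dist y z ^ 2 := by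
    rw [hxz2, hyz2]
    linear_combination hkd
  have hxyz : dist x z = dist y z := by
    calc dist x z = Real.sqrt (dist x z ^ 2) := (Real.sqrt_sq dist_nonneg).symm
    _ = Real.sqrt (dist y z ^ 2) := by rw [hsq]
    _ = dist y z := Real.sqrt_sq dist_nonneg
  have hzl : z (Fin.last n) = 0 := by rw [hz]; exact hbdry k
  refine ⟨⟨hk0, hk1⟩, hxyz, ?_, ?_, ?_⟩
  · -- uniqueness
    rintro k' ⟨h0, h1⟩ heq
    have e1 := distx k' h0.le
    have e2 := disty k' h1.le
    have heq2 : (k' * dist x' y') ^ 2 + x (Fin.last n) ^ 2 =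
        ((1 - k') * dist x' y') ^ 2 + y (Fin.last n) ^ 2 := by
      rw [← e1, ← e2, heq]
    have hkd' : k' * (2 * dist x' y' ^ 2) = k * (2 * dist x' y' ^ 2) := by
      linear_combination heq2 - hkd
    exact mul_right_cancel₀ (by positivity) hkd'
  · -- value formula
    have heq1 : dist x y ^ 2 - (x (Fin.last n) - y (Fin.last n)) ^ 2 = dist x' y' ^ 2 := by
      linarith [hD2]
    have heq2 : dist x y ^ 2 + 4 * x (Fin.last n) * y (Fin.last n) =
        dist x' y' ^ 2 + (x (Fin.last n) + y (Fin.last n)) ^ 2 := by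
      rw [hD2]; ring
    have hq : (0 : ℝ) ≤ (dist x y ^ 2 + 4 * x (Fin.last n) * y (Fin.last n)) /
        (dist x y ^ 2 - (x (Fin.last n) - y (Fin.last n)) ^ 2) := by
      rw [heq1, heq2]; positivity
    have hrhs : 0 ≤ dist x y / 2 * Real.sqrt ((dist x y ^ 2 + 4 * x (Fin.last n) * y (Fin.last n)) /
        (dist x y ^ 2 - (x (Fin.last n) - y (Fin.last n)) ^ 2)) := by positivity
    have hsq2 : dist x z ^ 2 = (dist x y / 2 * Real.sqrt ((dist x y ^ 2 + 4 * x (Fin.last n) * y (Fin.last n)) /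
        (dist x y ^ 2 - (x (Fin.last n) - y (Fin.last n)) ^ 2))) ^ 2 := by
      rw [mul_pow, div_pow, Real.sq_sqrt hq, hxz2, heq1, heq2, hD2]
      rw [div_mul_div_comm, eq_div_iff (by positivity)]
      linear_combination (2 * k * dist x' y' ^ 2 + dist x' y' ^ 2
        - x (Fin.last n) ^ 2 + y (Fin.last n) ^ 2) * hkd
    calc dist x z = Real.sqrt (dist x z ^ 2) := (Real.sqrt_sq dist_nonneg).symm
    _ = Real.sqrt ((dist x y / 2 * Real.sqrt ((dist x y ^ 2 + 4 * x (Fin.last n) * y (Fin.last n)) /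
        (dist x y ^ 2 - (x (Fin.last n) - y (Fin.last n)) ^ 2))) ^ 2) := by rw [hsq2]
    _ = _ := Real.sqrt_sq hrhs
  · -- infimum
    have hmem : dist x z ∈ (fun w => max (dist x w) (dist y w)) '' upperHalfSpaceBdry n :=
      ⟨z, hzl, by show max (dist x z) (dist y z) = dist x z; rw [← hxyz, max_self]⟩
    have hbdd : BddBelow ((fun w => max (dist x w) (dist y w)) '' upperHalfSpaceBdry n) := by
      refine ⟨0, ?_⟩
      rintro s ⟨w, hw, rfl⟩
      exact le_trans dist_nonneg (le_max_left _ _)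
    have hlb : ∀ s ∈ (fun w => max (dist x w) (dist y w)) '' upperHalfSpaceBdry n,
        dist x z ≤ s := by
      rintro s ⟨w, hw, rfl⟩
      show dist x z ≤ max (dist x w) (dist y w)
      have hw' : w (Fin.last n) = 0 := hw
      have ht : dist x' y' ≤ dist x' w + dist y' w := by
        rw [dist_comm y' w]; exact dist_triangle x' w y'
      rcases le_or_gt (k * dist x' y') (dist x' w) with hc | hc
      · have hle : dist x z ^ 2 ≤ dist x w ^ 2 := by
          rw [hxz2, pythx w hw']
          have := pow_le_pow_left₀ (mul_nonneg hk0.le hd.le) hc 2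
          linarith
        exact le_trans (le_of_sq_le' dist_nonneg dist_nonneg hle) (le_max_left _ _)
      · have h2 : (1 - k) * dist x' y' ≤ dist y' w := by
          have hr : (1 - k) * dist x' y' = dist x' y' - k * dist x' y' := by ring
          linarith
        have hle : dist y z ^ 2 ≤ dist y w ^ 2 := by
          rw [hyz2, pythy w hw']
          have := pow_le_pow_left₀ (mul_nonneg (by linarith : (0:ℝ) ≤ 1 - k) hd.le) h2 2
          linarith
        rw [hxyz]
        exact le_trans (le_of_sq_le' dist_nonneg dist_nonneg hle) (le_max_right _ _)
    exact le_antisymm (csInf_le hbdd hmem) (le_csInf ⟨_, hmem⟩ hlb)
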